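/- In the weakly separable change-point model with the integrability, smoothness/i.i.d., fourth-moment and eigen-gap assumptions and sub-Gaussian standardized scores, and with the change-point estimator satisfying |τ̂ − τ*| = O_p(1), for each 1 ≤ r ≤ R the CUSUM processes at the estimated and true change-points satisfy max_{1≤j≤p} |⟨Δ̂_{τ̂}(s_j;·) − Δ̂_{τ*}(s_j;·), ψ_r⟩_{L²(T)}| = O_p((log p / n)^{1/2}). -/

import Mathlib

/-!
Statement 13: uniform closeness of the CUSUM processes at the estimated and true
change points: max_j |⟨Δ̂_τ̂(s_j;·) − Δ̂_τ*(s_j;·), ψ_r⟩| = O_p(√(log p / n)).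
-/

open MeasureTheory ProbabilityTheory Filter Real
open scoped ENNReal NNReal Topology RealInnerProductSpace

namespace SpatialFDA13

variable {Ω : Type*} [MeasurableSpace Ω]
variable {H : Type*} [NormedAddCommGroup H] [InnerProductSpace ℝ H] [CompleteSpace H]
  [MeasurableSpace H] [BorelSpace H] [SecondCountableTopology H]

/-- `IsBigOp P Z a` formalizes `Z_n = O_p(a_n)` (as (n,p)→∞, indexed by n). -/
def IsBigOp (P : Measure Ω) (Z : ℕ → Ω → ℝ) (a : ℕ → ℝ) : Prop :=
  ∀ ε : ℝ, 0 < ε → ∃ M : ℝ, 0 < M ∧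
    ∀ᶠ n in Filter.atTop, P {ω | M * a n < |Z n ω|} ≤ ENNReal.ofReal ε

/-- `IsLittleOp P Z a` formalizes `Z_n = o_p(a_n)`. -/
def IsLittleOp (P : Measure Ω) (Z : ℕ → Ω → ℝ) (a : ℕ → ℝ) : Prop :=
  ∀ ε : ℝ, 0 < ε →
    Filter.Tendsto (fun n => P {ω | ε * a n < |Z n ω|}) Filter.atTop (nhds 0)

/-- The scaled CUSUM process `Δ̂_t = m^{-1/2} (Σ_{i<t} Y_i − (t/m) Σ_{i<m} Y_i)`
of a sample `Y` of size `m`. -/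
noncomputable def cusum (m t : ℕ) (Y : ℕ → Ω → H) (ω : Ω) : H :=
  ((m : ℝ) ^ (-(1:ℝ)/2)) •
    ((∑ i ∈ Finset.range t, Y i ω) - (((t : ℝ) / (m : ℝ)) • ∑ i ∈ Finset.range m, Y i ω))

/-- A sequence (indexed by the sample size `n`) of spatially indexed functional
change-point models: `p n` spatial locations `s n j`, change point `τ n`, pre- and
post-change mean curves `μ0 n j`, `μ1 n j` in `H = L²(T)`, error curves `ε n i j`,
a common orthonormal system `ψ` of `H` (the weak-separability basis), a spatial
kernel `K` and bandwidths `h n`. -/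
structure SpatialModel (Ω : Type*) (H : Type*) [NormedAddCommGroup H]
    [InnerProductSpace ℝ H] where
  p : ℕ → ℕ
  τ : ℕ → ℕ
  μ0 : (n : ℕ) → Fin (p n) → H
  μ1 : (n : ℕ) → Fin (p n) → H
  ε : (n : ℕ) → ℕ → Fin (p n) → Ω → H
  ψ : ℕ → H
  s : (n : ℕ) → Fin (p n) → ℝ × ℝ
  K : ℝ × ℝ → ℝ
  h : ℕ → ℝ

namespace SpatialModel

variable (M : SpatialModel Ω H) (P : Measure Ω)

/-- The observations `X_i(s_j;·) = μ_i(s_j;·) + ε_i(s_j;·)`, with mean `μ0` up to the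
change point `τ n` and `μ1` afterwards. -/
noncomputable def obs (n i : ℕ) (j : Fin (M.p n)) (ω : Ω) : H :=
  (if i < M.τ n then M.μ0 n j else M.μ1 n j) + M.ε n i j ω

/-- The FPC scores `ξ_{ir}(s_j) = ⟨ε_i(s_j;·), ψ_r⟩`. -/
noncomputable def score (n i r : ℕ) (j : Fin (M.p n)) (ω : Ω) : ℝ :=
  ⟪M.ε n i j ω, M.ψ r⟫

/-- The score variances `λ_{r,j} = E[ξ_{ir}(s_j)²]`. -/
noncomputable def lamrj (n r : ℕ) (j : Fin (M.p n)) : ℝ :=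
  ∫ ω, (M.score n 0 r j ω) ^ 2 ∂P

/-- The score covariances `σ_r(s_j,s_k) = E[ξ_{ir}(s_j) ξ_{ir}(s_k)]`. -/
noncomputable def sigr (n r : ℕ) (j k : Fin (M.p n)) : ℝ :=
  ∫ ω, M.score n 0 r j ω * M.score n 0 r k ω ∂P

/-- The spatial correlations `ρ_r(s_j,s_k)`. -/
noncomputable def rhor (n r : ℕ) (j k : Fin (M.p n)) : ℝ :=
  M.sigr P n r j k / Real.sqrt (M.lamrj P n r j * M.lamrj P n r k)

/-- The averaged eigenvalues `λ_r = p⁻¹ Σ_j λ_{r,j}`. -/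
noncomputable def lambar (n r : ℕ) : ℝ :=
  (M.p n : ℝ)⁻¹ * ∑ j : Fin (M.p n), M.lamrj P n r j

/-- The standardized signals `δ*_{j,r} = λ_{r,j}^{-1/2} ⟨μ1(s_j;·) − μ0(s_j;·), ψ_r⟩`. -/
noncomputable def deltaStar (n : ℕ) (j : Fin (M.p n)) (r : ℕ) : ℝ :=
  ⟪M.μ1 n j - M.μ0 n j, M.ψ r⟫ / Real.sqrt (M.lamrj P n r j)

/-- The ℓ²-norm `‖δ*_j‖` of the standardized signal vector over `r < R`. -/
noncomputable def deltaNorm (R n : ℕ) (j : Fin (M.p n)) : ℝ :=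
  Real.sqrt (∑ r ∈ Finset.range R, (M.deltaStar P n j r) ^ 2)

/-- The half-sample size `m = n/2`. -/
def half (n : ℕ) : ℕ := n / 2

/-- The odd-indexed (1-based) half sample `X_O`. -/
noncomputable def obsO (n i : ℕ) (j : Fin (M.p n)) (ω : Ω) : H := M.obs n (2 * i) j ω

/-- The even-indexed (1-based) half sample `X_E`. -/
noncomputable def obsE (n i : ℕ) (j : Fin (M.p n)) (ω : Ω) : H := M.obs n (2 * i + 1) j ω

/-- The change point of the odd half sample corresponding to a full-sample index `t`. -/
def idxO (t : ℕ) : ℕ := (t + 1) / 2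

/-- The change point of the even half sample corresponding to a full-sample index `t`. -/
def idxE (t : ℕ) : ℕ := t / 2

/-- The oracle scaled CUSUM statistic `η*_{j,r}` (full sample, true change point,
true eigenfunctions and score variances). -/
noncomputable def etaStarFull (n : ℕ) (j : Fin (M.p n)) (r : ℕ) (ω : Ω) : ℝ :=
  (Real.sqrt (M.lamrj P n r j))⁻¹ *
    ⟪cusum n (M.τ n) (fun i => M.obs n i j) ω, M.ψ r⟫

/-- The oracle statistic `η*^O_{j,r}` computed on the odd half sample. -/
noncomputable def etaStarO (n : ℕ) (j : Fin (M.p n)) (r : ℕ) (ω : Ω) : ℝ :=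
  (Real.sqrt (M.lamrj P n r j))⁻¹ *
    ⟪cusum (half n) (idxO (M.τ n)) (fun i => M.obsO n i j) ω, M.ψ r⟫

/-- The oracle statistic `η*^E_{j,r}` computed on the even half sample. -/
noncomputable def etaStarE (n : ℕ) (j : Fin (M.p n)) (r : ℕ) (ω : Ω) : ℝ :=
  (Real.sqrt (M.lamrj P n r j))⁻¹ *
    ⟪cusum (half n) (idxE (M.τ n)) (fun i => M.obsE n i j) ω, M.ψ r⟫

/-- The kernel weight `K_h(s_k − s_j) = K((s_k − s_j)/h)/h²`. -/
noncomputable def KHw (n : ℕ) (k j : Fin (M.p n)) : ℝ :=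
  M.K ((M.h n)⁻¹ • (M.s n k - M.s n j)) / (M.h n) ^ 2

/-- The kernel-weighted oracle statistic `η̃*_{j,r}` built from the full-sample `η*`. -/
noncomputable def etaTildeStarFull (n : ℕ) (j : Fin (M.p n)) (r : ℕ) (ω : Ω) : ℝ :=
  (∑ k : Fin (M.p n), M.KHw n k j * M.etaStarFull P n k r ω) /
    (∑ k : Fin (M.p n), M.KHw n k j)

/-- The kernel-weighted oracle statistic `η̃*^E_{j,r}` on the even half sample. -/
noncomputable def etaTildeStarE (n : ℕ) (j : Fin (M.p n)) (r : ℕ) (ω : Ω) : ℝ :=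
  (∑ k : Fin (M.p n), M.KHw n k j * M.etaStarE P n k r ω) /
    (∑ k : Fin (M.p n), M.KHw n k j)

/-- The oracle ranking statistic `W*_j = Σ_{r<R} η*^O_{j,r} η̃*^E_{j,r}`. -/
noncomputable def Wstar (R n : ℕ) (j : Fin (M.p n)) (ω : Ω) : ℝ :=
  ∑ r ∈ Finset.range R, M.etaStarO P n j r ω * M.etaTildeStarE P n j r ω

/-- The full-sample differencing-based marginal covariance estimator `Ĥ` as an
operator on `H`. -/
noncomputable def HhatFull (n : ℕ) (ω : Ω) : H →L[ℝ] H :=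
  (2 * (M.p n : ℝ) * ((n : ℝ) - 1))⁻¹ •
    ∑ i ∈ Finset.range (n - 1), ∑ j : Fin (M.p n),
      ((innerSL ℝ (M.obs n (i+1) j ω - M.obs n i j ω)).smulRight
        (M.obs n (i+1) j ω - M.obs n i j ω))

/-- The differencing-based marginal covariance estimator computed on the odd half. -/
noncomputable def HhatO (n : ℕ) (ω : Ω) : H →L[ℝ] H :=
  (2 * (M.p n : ℝ) * ((half n : ℝ) - 1))⁻¹ •
    ∑ i ∈ Finset.range (half n - 1), ∑ j : Fin (M.p n),
      ((innerSL ℝ (M.obsO n (i+1) j ω - M.obsO n i j ω)).smulRight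
        (M.obsO n (i+1) j ω - M.obsO n i j ω))

/-- The differencing-based marginal covariance estimator computed on the even half. -/
noncomputable def HhatE (n : ℕ) (ω : Ω) : H →L[ℝ] H :=
  (2 * (M.p n : ℝ) * ((half n : ℝ) - 1))⁻¹ •
    ∑ i ∈ Finset.range (half n - 1), ∑ j : Fin (M.p n),
      ((innerSL ℝ (M.obsE n (i+1) j ω - M.obsE n i j ω)).smulRight
        (M.obsE n (i+1) j ω - M.obsE n i j ω))

/-- The full-sample differencing-based cross-covariance estimator `Σ̂_r(j,k)`,
computed using an estimated eigenfunction family `ψhat`. -/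
noncomputable def SighatFull (ψhat : ℕ → ℕ → Ω → H) (n r : ℕ) (j k : Fin (M.p n))
    (ω : Ω) : ℝ :=
  (2 * ((n : ℝ) - 1))⁻¹ * ∑ i ∈ Finset.range (n - 1),
    ⟪M.obs n (i+1) j ω - M.obs n i j ω, ψhat n r ω⟫ *
    ⟪M.obs n (i+1) k ω - M.obs n i k ω, ψhat n r ω⟫

/-- The cross-covariance estimator computed on the odd half. -/
noncomputable def SighatO (ψhatO : ℕ → ℕ → Ω → H) (n r : ℕ) (j k : Fin (M.p n))
    (ω : Ω) : ℝ :=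
  (2 * ((half n : ℝ) - 1))⁻¹ * ∑ i ∈ Finset.range (half n - 1),
    ⟪M.obsO n (i+1) j ω - M.obsO n i j ω, ψhatO n r ω⟫ *
    ⟪M.obsO n (i+1) k ω - M.obsO n i k ω, ψhatO n r ω⟫

/-- The cross-covariance estimator computed on the even half. -/
noncomputable def SighatE (ψhatE : ℕ → ℕ → Ω → H) (n r : ℕ) (j k : Fin (M.p n))
    (ω : Ω) : ℝ :=
  (2 * ((half n : ℝ) - 1))⁻¹ * ∑ i ∈ Finset.range (half n - 1),
    ⟪M.obsE n (i+1) j ω - M.obsE n i j ω, ψhatE n r ω⟫ *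
    ⟪M.obsE n (i+1) k ω - M.obsE n i k ω, ψhatE n r ω⟫

/-- The fully estimated scaled CUSUM statistic `η̂_{j,r}` on the full sample, at the
estimated change point `τ̂`. -/
noncomputable def etaHatFull (ψhat : ℕ → ℕ → Ω → H) (τhat : ℕ → Ω → ℕ)
    (n : ℕ) (j : Fin (M.p n)) (r : ℕ) (ω : Ω) : ℝ :=
  (Real.sqrt (M.SighatFull ψhat n r j j ω))⁻¹ *
    ⟪cusum n (τhat n ω) (fun i => M.obs n i j) ω, ψhat n r ω⟫

/-- The estimated statistic `η̂^O_{j,r}` on the odd half sample at `τ̂`. -/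
noncomputable def etaHatO (ψhatO : ℕ → ℕ → Ω → H) (τhat : ℕ → Ω → ℕ)
    (n : ℕ) (j : Fin (M.p n)) (r : ℕ) (ω : Ω) : ℝ :=
  (Real.sqrt (M.SighatO ψhatO n r j j ω))⁻¹ *
    ⟪cusum (half n) (idxO (τhat n ω)) (fun i => M.obsO n i j) ω, ψhatO n r ω⟫

/-- The estimated statistic `η̂^E_{j,r}` on the even half sample at `τ̂`. -/
noncomputable def etaHatE (ψhatE : ℕ → ℕ → Ω → H) (τhat : ℕ → Ω → ℕ)
    (n : ℕ) (j : Fin (M.p n)) (r : ℕ) (ω : Ω) : ℝ :=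
  (Real.sqrt (M.SighatE ψhatE n r j j ω))⁻¹ *
    ⟪cusum (half n) (idxE (τhat n ω)) (fun i => M.obsE n i j) ω, ψhatE n r ω⟫

/-- The kernel-weighted estimated statistic `η̃^E_{j,r}` on the even half. -/
noncomputable def etaTildeHatE (ψhatE : ℕ → ℕ → Ω → H) (τhat : ℕ → Ω → ℕ)
    (n : ℕ) (j : Fin (M.p n)) (r : ℕ) (ω : Ω) : ℝ :=
  (∑ k : Fin (M.p n), M.KHw n k j * M.etaHatE ψhatE τhat n k r ω) /
    (∑ k : Fin (M.p n), M.KHw n k j)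

/-- The fSDA ranking statistic `W_j = Σ_{r<R} η̂^O_{j,r} η̃^E_{j,r}`. -/
noncomputable def West (R : ℕ) (ψhatO ψhatE : ℕ → ℕ → Ω → H) (τhat : ℕ → Ω → ℕ)
    (n : ℕ) (j : Fin (M.p n)) (ω : Ω) : ℝ :=
  ∑ r ∈ Finset.range R, M.etaHatO ψhatO τhat n j r ω * M.etaTildeHatE ψhatE τhat n j r ω

open Classical in
/-- The set `A^c` of null locations (no mean change). -/
noncomputable def Ac (n : ℕ) : Finset (Fin (M.p n)) :=
  Finset.univ.filter (fun j => M.μ0 n j = M.μ1 n j)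

/-- The σ-algebra generated by the even half sample `X_E` (equivalently, by the
even-indexed errors). -/
def sigmaE (n : ℕ) : MeasurableSpace Ω :=
  MeasurableSpace.comap (fun ω => fun (i : ℕ) (j : Fin (M.p n)) => M.ε n (2*i+1) j ω)
    inferInstance

/-- The conditional tail function `G(t) = p₀⁻¹ Σ_{j ∈ A^c} Pr(W*_j ≥ t | X_E)`. -/
noncomputable def Gplus (R n : ℕ) (t : ℝ) (ω : Ω) : ℝ :=
  ((M.Ac n).card : ℝ)⁻¹ * ∑ j ∈ M.Ac n,
    MeasureTheory.condExp (M.sigmaE n) P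
      (fun ω' => if t ≤ M.Wstar P R n j ω' then (1:ℝ) else 0) ω

/-- The conditional tail function `G₋(t) = p₀⁻¹ Σ_{j ∈ A^c} Pr(W*_j ≤ −t | X_E)`. -/
noncomputable def Gminus (R n : ℕ) (t : ℝ) (ω : Ω) : ℝ :=
  ((M.Ac n).card : ℝ)⁻¹ * ∑ j ∈ M.Ac n,
    MeasureTheory.condExp (M.sigmaE n) P
      (fun ω' => if M.Wstar P R n j ω' ≤ -t then (1:ℝ) else 0) ω

/-- `t* = G₋^{-1}(α b_p / p₀) = inf{t ≥ 0 : G₋(t) ≤ α b_p / p₀}`. -/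
noncomputable def tstar (R : ℕ) (α : ℝ) (b : ℕ → ℕ) (n : ℕ) (ω : Ω) : ℝ :=
  sInf {t : ℝ | 0 ≤ t ∧ M.Gminus P R n t ω ≤ α * (b n : ℝ) / ((M.Ac n).card : ℝ)}

end SpatialModel

open Classical in
/-- `#{j : t ≤ W j}`. -/
noncomputable def countGe {q : ℕ} (W : Fin q → ℝ) (t : ℝ) : ℕ :=
  (Finset.univ.filter (fun j => t ≤ W j)).card

open Classical in
/-- `#{j : W j ≤ −t}`. -/
noncomputable def countLe {q : ℕ} (W : Fin q → ℝ) (t : ℝ) : ℕ :=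
  (Finset.univ.filter (fun j => W j ≤ -t)).card

/-- The candidate thresholds `{t > 0 : (1 + #{W_j ≤ −t}) / (#{W_j ≥ t} ∨ 1) ≤ α}`. -/
def threshSet {q : ℕ} (W : Fin q → ℝ) (α : ℝ) : Set ℝ :=
  {t : ℝ | 0 < t ∧ (1 + (countLe W t : ℝ)) ≤ α * max (countGe W t : ℝ) 1}

open Classical in
/-- The fSDA discovery set `{j : W_j ≥ L}`, where `L = inf` of the candidate
thresholds; the empty set if no candidate threshold exists (corresponding to
`L = +∞`). -/
noncomputable def discoverySet {q : ℕ} (W : Fin q → ℝ) (α : ℝ) : Finset (Fin q) :=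
  if (threshSet W α).Nonempty then
    Finset.univ.filter (fun j => sInf (threshSet W α) ≤ W j)
  else ∅

/-- The false discovery proportion of the fSDA procedure:
`FDP_w(L) = #{j ∈ A^c : W_j ≥ L} / (#{j : W_j ≥ L} ∨ 1)`. -/
noncomputable def FDPw {q : ℕ} (W : Fin q → ℝ) (α : ℝ) (Ac : Finset (Fin q)) : ℝ :=
  ((discoverySet W α ∩ Ac).card : ℝ) / max ((discoverySet W α).card : ℝ) 1


lemma chernoff_one {Ω : Type*} [MeasurableSpace Ω] {P : Measure Ω} [IsProbabilityMeasure P]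
    {X : Ω → ℝ} {σ2 : ℝ} (hσ : 0 < σ2)
    (hInt : ∀ x : ℝ, Integrable (fun ω => Real.exp (x * X ω)) P)
    (hmgf : ∀ x : ℝ, ∫ ω, Real.exp (x * X ω) ∂P ≤ Real.exp (x ^ 2 * σ2 / 2))
    {t : ℝ} (ht : 0 ≤ t) :
    P {ω | t ≤ X ω} ≤ ENNReal.ofReal (Real.exp (-(t ^ 2) / (2 * σ2))) := by
  have hx : (0:ℝ) ≤ t / σ2 := div_nonneg ht hσ.le
  have h := measure_ge_le_exp_mul_mgf (μ := P) (X := X) (ε := t) hx (hInt (t/σ2))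
  have hmgf' : mgf X P (t/σ2) ≤ Real.exp ((t/σ2)^2 * σ2 / 2) := hmgf _
  have hb : Real.exp (-(t/σ2) * t) * mgf X P (t/σ2) ≤ Real.exp (-(t^2)/(2*σ2)) := by
    calc Real.exp (-(t/σ2) * t) * mgf X P (t/σ2)
        ≤ Real.exp (-(t/σ2) * t) * Real.exp ((t/σ2)^2 * σ2 / 2) :=
          mul_le_mul_of_nonneg_left hmgf' (Real.exp_nonneg _)
      _ = Real.exp (-(t/σ2)*t + (t/σ2)^2*σ2/2) := (Real.exp_add _ _).symm
      _ = Real.exp (-(t^2)/(2*σ2)) := by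
          congr 1; field_simp; ring
  calc P {ω | t ≤ X ω}
      = ENNReal.ofReal (P {ω | t ≤ X ω}).toReal :=
        (ENNReal.ofReal_toReal (measure_ne_top _ _)).symm
    _ ≤ ENNReal.ofReal (Real.exp (-(t^2)/(2*σ2))) :=
        ENNReal.ofReal_le_ofReal (h.trans hb)

lemma chernoff_abs {Ω : Type*} [MeasurableSpace Ω] {P : Measure Ω} [IsProbabilityMeasure P]
    {X : Ω → ℝ} {σ2 : ℝ} (hσ : 0 < σ2)
    (hInt : ∀ x : ℝ, Integrable (fun ω => Real.exp (x * X ω)) P)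
    (hmgf : ∀ x : ℝ, ∫ ω, Real.exp (x * X ω) ∂P ≤ Real.exp (x ^ 2 * σ2 / 2))
    {t : ℝ} (ht : 0 ≤ t) :
    P {ω | t < |X ω|} ≤ ENNReal.ofReal (2 * Real.exp (-(t ^ 2) / (2 * σ2))) := by
  have hInt' : ∀ x : ℝ, Integrable (fun ω => Real.exp (x * (-X ω))) P := by
    intro x; simpa [neg_mul, mul_neg] using hInt (-x)
  have hmgf' : ∀ x : ℝ, ∫ ω, Real.exp (x * (-X ω)) ∂P ≤ Real.exp (x ^ 2 * σ2 / 2) := by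
    intro x
    have := hmgf (-x)
    simpa [neg_mul, mul_neg, neg_neg] using this
  have hsub : {ω | t < |X ω|} ⊆ {ω | t ≤ X ω} ∪ {ω | t ≤ -X ω} := by
    intro ω hω
    simp only [Set.mem_setOf_eq] at hω
    rcases lt_abs.mp hω with h | h
    · exact Or.inl h.le
    · exact Or.inr h.le
  calc P {ω | t < |X ω|} ≤ P ({ω | t ≤ X ω} ∪ {ω | t ≤ -X ω}) := measure_mono hsub
    _ ≤ P {ω | t ≤ X ω} + P {ω | t ≤ -X ω} := measure_union_le _ _
    _ ≤ ENNReal.ofReal (Real.exp (-(t ^ 2) / (2 * σ2)))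
        + ENNReal.ofReal (Real.exp (-(t ^ 2) / (2 * σ2))) :=
        add_le_add (chernoff_one hσ hInt hmgf ht) (chernoff_one hσ hInt' hmgf' ht)
    _ = ENNReal.ofReal (2 * Real.exp (-(t ^ 2) / (2 * σ2))) := by
        rw [← ENNReal.ofReal_add (Real.exp_nonneg _) (Real.exp_nonneg _)]
        congr 1; ring

open ProbabilityTheory in
lemma chernoff_abs_sum {Ω : Type*} [MeasurableSpace Ω] {P : Measure Ω} [IsProbabilityMeasure P]
    {X : ℕ → Ω → ℝ} {σ2 : ℝ} (hσ : 0 < σ2) (n : ℕ) (hn : 0 < n)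
    (hIndep : iIndepFun X P)
    (hMeas : ∀ i, Measurable (X i))
    (hInt : ∀ i x, Integrable (fun ω => Real.exp (x * X i ω)) P)
    (hmgf : ∀ i x, ∫ ω, Real.exp (x * X i ω) ∂P ≤ Real.exp (x ^ 2 * σ2 / 2))
    {t : ℝ} (ht : 0 ≤ t) :
    P {ω | t < |∑ i ∈ Finset.range n, X i ω|} ≤
      ENNReal.ofReal (2 * Real.exp (-(t ^ 2) / (2 * ((n : ℝ) * σ2)))) := by
  have hσ' : 0 < (n : ℝ) * σ2 := by positivity
  have hIntS : ∀ x : ℝ,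
      Integrable (fun ω => Real.exp (x * ∑ i ∈ Finset.range n, X i ω)) P := by
    intro x
    have := hIndep.integrable_exp_mul_sum (t := x) hMeas (s := Finset.range n)
      (fun i _ => hInt i x)
    simpa [Finset.sum_apply] using this
  have hmgfS : ∀ x : ℝ, ∫ ω, Real.exp (x * ∑ i ∈ Finset.range n, X i ω) ∂P ≤
      Real.exp (x ^ 2 * ((n : ℝ) * σ2) / 2) := by
    intro x
    have hs := hIndep.mgf_sum (t := x) hMeas (Finset.range n)
    have h1 : ∫ ω, Real.exp (x * ∑ i ∈ Finset.range n, X i ω) ∂P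
        = mgf (∑ i ∈ Finset.range n, X i) P x := by
      simp [mgf, Finset.sum_apply]
    rw [h1, hs]
    calc ∏ i ∈ Finset.range n, mgf (X i) P x
        ≤ ∏ i ∈ Finset.range n, Real.exp (x ^ 2 * σ2 / 2) :=
          Finset.prod_le_prod (fun i _ => mgf_nonneg) (fun i _ => hmgf i x)
      _ = Real.exp (x ^ 2 * ((n : ℝ) * σ2) / 2) := by
          rw [Finset.prod_const, Finset.card_range, ← Real.exp_nat_mul]
          congr 1; ring
  exact chernoff_abs hσ' hIntS hmgfS ht


set_option maxHeartbeats 2000000 in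
open SpatialModel in
open Classical in
theorem cusum_changepoint_stability
    (M : SpatialModel Ω H) (P : Measure Ω) [IsProbabilityMeasure P]
    (R : ℕ) (hR : 0 < R)
    (hp0 : ∀ n, 0 < M.p n)
    (hpTop : Tendsto (fun n => M.p n) atTop atTop)
    -- one change point τ* = τ n with τ*/n → θ0 ∈ (0,1)
    (hτ : ∀ n, M.τ n ≤ n)
    (θ0 : ℝ) (hθ0 : θ0 ∈ Set.Ioo (0:ℝ) 1)
    (hτθ : Tendsto (fun n => (M.τ n : ℝ) / (n : ℝ)) atTop (𝓝 θ0))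
    -- i.i.d. mean-zero errors with fourth moments
    (hMeas : ∀ n i j, Measurable (M.ε n i j))
    (hIndep : ∀ n, iIndepFun (m := fun _ => (inferInstance : MeasurableSpace (Fin (M.p n) → H)))
      (fun i => fun ω j => M.ε n i j ω) P)
    (hIdent : ∀ n i, IdentDistrib (fun ω (j : Fin (M.p n)) => M.ε n i j ω)
      (fun ω j => M.ε n 0 j ω) P P)
    (hZero : ∀ n i j, ∫ ω, M.ε n i j ω ∂P = 0)
    (hMom4 : ∀ n i j, MemLp (M.ε n i j) 4 P)
    -- weak separability: ψ orthonormal and total, scores uncorrelated across r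
    (hON : Orthonormal ℝ M.ψ)
    (hTotal : (Submodule.span ℝ (Set.range M.ψ)).topologicalClosure = ⊤)
    (hUncorr : ∀ n i r r', r ≠ r' → ∀ j k,
      ∫ ω, M.score n i r j ω * M.score n i r' k ω ∂P = 0)
    -- eigen-gap assumption
    (hGap : ∀ n, ∀ r' < R, ∀ r < r', M.lambar P n r' < M.lambar P n r)
    (hPos : ∀ n, ∀ r < R, 0 < M.lambar P n r)
    (c1 c2 : ℝ) (hc1 : 0 < c1)
    (hSigLow : ∀ n, ∀ r < R, ∀ v : Fin (M.p n) → ℝ,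
      c1 * ∑ j, (v j)^2 ≤ ∑ j, ∑ k, v j * M.sigr P n r j k * v k)
    (hSigHigh : ∀ n, ∀ r < R, ∀ v : Fin (M.p n) → ℝ,
      ∑ j, ∑ k, v j * M.sigr P n r j k * v k ≤ c2 * ∑ j, (v j)^2)
    -- Assumption 6: sub-Gaussian standardized scores, uniformly summable eigenvalues
    (γ : ℝ) (hγ : 0 < γ)
    (hSubGInt : ∀ n i j, ∀ r < R, ∀ x : ℝ,
      Integrable (fun ω => Real.exp (x * M.score n i r j ω)) P)
    (hSubG : ∀ n i j, ∀ r < R, ∀ x : ℝ,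
      ∫ ω, Real.exp (x * M.score n i r j ω) ∂P ≤
        Real.exp (x^2 * γ^2 * M.lamrj P n r j / 2))
    (Mbd : ℝ)
    (hSumm : ∀ n j, Summable (fun r => M.lamrj P n r j))
    (hMbd : ∀ n j, ∑' r, M.lamrj P n r j < Mbd)
    -- uniformly bounded mean functions
    (hμbdd : ∃ C : ℝ, ∀ n (j : Fin (M.p n)), ‖M.μ0 n j‖ ≤ C ∧ ‖M.μ1 n j‖ ≤ C)
    -- the change-point estimator τ̂ (argmax of the kernel CUSUM statistic),
    -- consistent in the sense |τ̂ − τ*| = O_p(1)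
    (τhat : ℕ → Ω → ℕ)
    (hτhatMeas : ∀ n, Measurable (τhat n))
    (hτhatRange : ∀ n ω, 1 < n → 1 ≤ τhat n ω ∧ τhat n ω < n)

    (hτhatDev : IsBigOp P (fun n ω => |(τhat n ω : ℝ) - (M.τ n : ℝ)|) (fun _ => 1)) :
    -- conclusion
    ∀ r < R, IsBigOp P
      (fun n ω => ⨆ j : Fin (M.p n),
        |⟪cusum n (τhat n ω) (fun i => M.obs n i j) ω -
           cusum n (M.τ n) (fun i => M.obs n i j) ω, M.ψ r⟫|)
      (fun n => Real.sqrt (Real.log (M.p n) / (n : ℝ))) := by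
  classical
  intro r hr ε hε
  obtain ⟨C, hC⟩ := hμbdd
  have hC0 : 0 ≤ C := le_trans (norm_nonneg _) (hC 0 ⟨0, hp0 0⟩).1
  have hlamnn : ∀ n r' j, 0 ≤ M.lamrj P n r' j := fun n r' j =>
    integral_nonneg fun ω => sq_nonneg _
  have hMbd0 : 0 < Mbd :=
    lt_of_le_of_lt (tsum_nonneg fun r' => hlamnn 0 r' ⟨0, hp0 0⟩) (hMbd 0 ⟨0, hp0 0⟩)
  have hlamle : ∀ n j, M.lamrj P n r j ≤ Mbd := fun n j =>
    le_of_lt (lt_of_le_of_lt (Summable.le_tsum (hSumm n j) r fun _ _ => hlamnn n _ j) (hMbd n j))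
  have hlampos : ∀ n j, 0 < M.lamrj P n r j := by
    intro n j
    have h := hSigLow n r hr (fun k => if k = j then (1:ℝ) else 0)
    have h1 : ∑ j' : Fin (M.p n), (if j' = j then (1:ℝ) else 0) ^ 2 = 1 := by
      simp [pow_two]
    have h2 : ∑ j' : Fin (M.p n), ∑ k : Fin (M.p n),
        (if j' = j then (1:ℝ) else 0) * M.sigr P n r j' k * (if k = j then (1:ℝ) else 0)
        = M.lamrj P n r j := by
      simp [mul_ite, ite_mul, SpatialModel.sigr, SpatialModel.lamrj, pow_two]
    rw [h1, h2, mul_one] at h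
    exact lt_of_lt_of_le hc1 h
  set M1 : ℝ := 2 * γ * Real.sqrt Mbd with hM1def
  have hM10 : 0 < M1 := by positivity
  obtain ⟨Md, hMd0, hEvA⟩ := hτhatDev (ε/2) (by positivity)
  set K : ℕ := ⌈Md⌉₊ with hKdef
  have hMdK : Md ≤ (K:ℝ) := Nat.le_ceil Md
  set Mfin : ℝ := 3*(K:ℝ)*C + 3*(K:ℝ)*M1 + 1 with hMfindef
  have hMfin0 : 0 < Mfin := by positivity
  refine ⟨Mfin, hMfin0, ?_⟩
  set A : ℝ := 2*(2*(K:ℝ)+1) with hAdef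
  have hA0 : 0 < A := by positivity
  set N0 : ℕ := max 3 ⌈2*A/ε⌉₊ with hN0def
  -- the key exponent inequality
  have key : ∀ lam : ℝ, 0 < lam → lam ≤ Mbd → ∀ a La : ℝ, 0 < a → 0 ≤ La →
      -((M1 * Real.sqrt (a * La))^2) / (2 * (a * (γ^2 * lam))) ≤ -(2*La) := by
    intro lam h1 h2 a La ha hLa
    have hs : (Real.sqrt (a*La))^2 = a*La := Real.sq_sqrt (by positivity)
    have hM1sq : M1^2 = 4*γ^2*Mbd := by
      rw [hM1def, mul_pow, mul_pow, Real.sq_sqrt hMbd0.le]; ring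
    rw [mul_pow, hs, hM1sq, neg_div, neg_le_neg_iff, le_div_iff₀ (by positivity)]
    nlinarith [mul_le_mul_of_nonneg_left h2 (show (0:ℝ) ≤ 4*γ^2*a*La by positivity)]
  have hEvP := hpTop.eventually (eventually_ge_atTop N0)
  filter_upwards [hEvA, hEvP, eventually_ge_atTop 1] with n hAev hpN hn1
  -- basic facts about n and p
  have hppos : 0 < M.p n := hp0 n
  have hp3 : 3 ≤ M.p n := le_trans (le_max_left _ _) hpN
  set L : ℝ := Real.log (M.p n) with hLdef
  have hL1 : (1:ℝ) ≤ L := by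
    have h3 : Real.exp 1 ≤ 3 := Real.exp_one_lt_d9.le.trans (by norm_num)
    calc (1:ℝ) = Real.log (Real.exp 1) := (Real.log_exp 1).symm
      _ ≤ Real.log (M.p n) :=
        Real.log_le_log (Real.exp_pos 1) (h3.trans (by exact_mod_cast hp3))
  have hL0 : (0:ℝ) ≤ L := zero_le_one.trans hL1
  have hn0 : (0:ℝ) < (n:ℝ) := by exact_mod_cast hn1
  -- measurability and independence of scores
  have hScoreMeas : ∀ i (j : Fin (M.p n)), Measurable (fun ω => M.score n i r j ω) :=
    fun i j => (hMeas n i j).inner measurable_const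
  have hIndepScores : ∀ j : Fin (M.p n),
      ProbabilityTheory.iIndepFun
        (fun i ω => M.score n i r j ω) P := by
    intro j
    exact (hIndep n).comp (fun i (v : Fin (M.p n) → H) => ⟪v j, M.ψ r⟫)
      (fun i => (measurable_pi_apply j).inner measurable_const)
  have hmgfS : ∀ i (j : Fin (M.p n)) (x : ℝ),
      ∫ ω, Real.exp (x * M.score n i r j ω) ∂P ≤
        Real.exp (x^2 * (γ^2 * M.lamrj P n r j) / 2) := by
    intro i j x
    have := hSubG n i j r hr x
    calc ∫ ω, Real.exp (x * M.score n i r j ω) ∂P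
        ≤ Real.exp (x^2 * γ^2 * M.lamrj P n r j / 2) := this
      _ = Real.exp (x^2 * (γ^2 * M.lamrj P n r j) / 2) := by rw [mul_assoc]
  -- bad sets
  set B1 : Fin (M.p n) → ℕ → Set Ω :=
    fun j i => {ω | M1 * Real.sqrt L < |M.score n i r j ω|} with hB1def
  set B2 : Fin (M.p n) → Set Ω :=
    fun j => {ω | M1 * Real.sqrt ((n:ℝ) * L) <
      |∑ i ∈ Finset.range n, M.score n i r j ω|} with hB2def
  set W : Finset ℕ := Finset.Ico (M.τ n - K) (M.τ n + K) with hWdef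
  have hebd : (0:ℝ) ≤ 2 * Real.exp (-(2*L)) := by positivity
  have hB1bd : ∀ (j : Fin (M.p n)) i,
      P (B1 j i) ≤ ENNReal.ofReal (2 * Real.exp (-(2*L))) := by
    intro j i
    have h := chernoff_abs (P := P) (X := fun ω => M.score n i r j ω)
      (σ2 := γ^2 * M.lamrj P n r j)
      (by have := hlampos n j; positivity) (fun x => hSubGInt n i j r hr x)
      (hmgfS i j) (t := M1 * Real.sqrt L) (by positivity)
    refine h.trans (ENNReal.ofReal_le_ofReal ?_)
    have hk := key (M.lamrj P n r j) (hlampos n j) (hlamle n j) 1 L one_pos hL0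
    have h2 : -((M1 * Real.sqrt L)^2) / (2 * (γ^2 * M.lamrj P n r j)) ≤ -(2*L) := by
      simpa [one_mul] using hk
    exact mul_le_mul_of_nonneg_left (Real.exp_le_exp.mpr h2) (by norm_num)
  have hB2bd : ∀ j : Fin (M.p n),
      P (B2 j) ≤ ENNReal.ofReal (2 * Real.exp (-(2*L))) := by
    intro j
    have h := chernoff_abs_sum (P := P) (X := fun i ω => M.score n i r j ω)
      (σ2 := γ^2 * M.lamrj P n r j)
      (by have := hlampos n j; positivity) n (by omega)
      (hIndepScores j) (fun i => hScoreMeas i j)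
      (fun i x => hSubGInt n i j r hr x) (fun i x => hmgfS i j x)
      (t := M1 * Real.sqrt ((n:ℝ) * L)) (by positivity)
    refine h.trans (ENNReal.ofReal_le_ofReal ?_)
    have hk := key (M.lamrj P n r j) (hlampos n j) (hlamle n j) (n:ℝ) L hn0 hL0
    exact mul_le_mul_of_nonneg_left (Real.exp_le_exp.mpr hk) (by norm_num)
  set BadU : Set Ω := ⋃ j : Fin (M.p n), (B2 j ∪ ⋃ i ∈ W, B1 j i) with hBadUdef
  have hWcard : (W.card : ℝ) ≤ 2*(K:ℝ) := by
    have : W.card ≤ 2*K := by rw [hWdef, Nat.card_Ico]; omega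
    exact_mod_cast this
  have hBadUbd : P BadU ≤ ENNReal.ofReal (ε/2) := by
    have step1 : P BadU ≤ ∑ j : Fin (M.p n), P (B2 j ∪ ⋃ i ∈ W, B1 j i) :=
      measure_iUnion_fintype_le P _
    have step2 : ∀ j : Fin (M.p n), P (B2 j ∪ ⋃ i ∈ W, B1 j i) ≤
        ENNReal.ofReal ((2*(K:ℝ)+1) * (2 * Real.exp (-(2*L)))) := by
      intro j
      calc P (B2 j ∪ ⋃ i ∈ W, B1 j i) ≤ P (B2 j) + P (⋃ i ∈ W, B1 j i) :=
            measure_union_le _ _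
        _ ≤ ENNReal.ofReal (2 * Real.exp (-(2*L))) + ∑ i ∈ W, P (B1 j i) :=
            add_le_add (hB2bd j) (measure_biUnion_finset_le _ _)
        _ ≤ ENNReal.ofReal (2 * Real.exp (-(2*L)))
            + ∑ i ∈ W, ENNReal.ofReal (2 * Real.exp (-(2*L))) :=
            add_le_add le_rfl (Finset.sum_le_sum fun i _ => hB1bd j i)
        _ = ENNReal.ofReal (2 * Real.exp (-(2*L)))
            + (W.card : ℝ≥0∞) * ENNReal.ofReal (2 * Real.exp (-(2*L))) := by
            rw [Finset.sum_const, nsmul_eq_mul]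
        _ ≤ ENNReal.ofReal (2 * Real.exp (-(2*L)))
            + ENNReal.ofReal (2*(K:ℝ)) * ENNReal.ofReal (2 * Real.exp (-(2*L))) := by
            refine add_le_add le_rfl (mul_le_mul_left ?_ _)
            rw [← ENNReal.ofReal_natCast]
            exact ENNReal.ofReal_le_ofReal hWcard
        _ = ENNReal.ofReal ((2*(K:ℝ)+1) * (2 * Real.exp (-(2*L)))) := by
            rw [← ENNReal.ofReal_mul (by positivity)]
            rw [← ENNReal.ofReal_add hebd (by positivity)]
            congr 1; ring
    have step3 : P BadU ≤
        ENNReal.ofReal ((M.p n : ℝ) * ((2*(K:ℝ)+1) * (2 * Real.exp (-(2*L))))) := by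
      refine step1.trans ?_
      calc ∑ j : Fin (M.p n), P (B2 j ∪ ⋃ i ∈ W, B1 j i)
          ≤ ∑ _j : Fin (M.p n),
            ENNReal.ofReal ((2*(K:ℝ)+1) * (2 * Real.exp (-(2*L)))) :=
            Finset.sum_le_sum fun j _ => step2 j
        _ = (M.p n : ℝ≥0∞) * ENNReal.ofReal ((2*(K:ℝ)+1) * (2 * Real.exp (-(2*L)))) := by
            rw [Finset.sum_const, Finset.card_univ, Fintype.card_fin, nsmul_eq_mul]
        _ = ENNReal.ofReal ((M.p n : ℝ) * ((2*(K:ℝ)+1) * (2 * Real.exp (-(2*L))))) := by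
            rw [← ENNReal.ofReal_natCast (M.p n), ← ENNReal.ofReal_mul (by positivity)]
    refine step3.trans (ENNReal.ofReal_le_ofReal ?_)
    -- real arithmetic: p * ((2K+1) * 2 exp(-2L)) = A / p ≤ ε/2
    have hexpL : Real.exp L = (M.p n : ℝ) := Real.exp_log (by exact_mod_cast hppos)
    have hexp2L : Real.exp (-(2*L)) = ((M.p n : ℝ) * (M.p n : ℝ))⁻¹ := by
      rw [show -(2*L) = -(L+L) by ring, Real.exp_neg, Real.exp_add, hexpL]
    have hppos' : (0:ℝ) < (M.p n : ℝ) := by exact_mod_cast hppos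
    have heq : (M.p n : ℝ) * ((2*(K:ℝ)+1) * (2 * Real.exp (-(2*L)))) = A / (M.p n : ℝ) := by
      rw [hexp2L, hAdef]; field_simp
    rw [heq]
    have hN0le : 2*A/ε ≤ (M.p n : ℝ) := by
      have h1 : 2*A/ε ≤ (⌈2*A/ε⌉₊ : ℝ) := Nat.le_ceil _
      have h2 : (⌈2*A/ε⌉₊ : ℕ) ≤ N0 := le_max_right _ _
      have h3 : N0 ≤ M.p n := hpN
      have : ((⌈2*A/ε⌉₊ : ℕ) : ℝ) ≤ (M.p n : ℝ) := by exact_mod_cast le_trans h2 h3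
      linarith
    rw [div_le_iff₀ hppos']
    have h2A : 2*A ≤ ε * (M.p n : ℝ) := by
      have := (div_le_iff₀ hε).mp hN0le
      linarith
    linarith
  -- now the deterministic inclusion
  have hincl : {ω | Mfin * Real.sqrt (L / (n:ℝ)) <
      |(⨆ j : Fin (M.p n), |⟪cusum n (τhat n ω) (fun i => M.obs n i j) ω -
        cusum n (M.τ n) (fun i => M.obs n i j) ω, M.ψ r⟫|)| } ⊆
      {ω | Md * (1:ℝ) < |(|(τhat n ω : ℝ) - (M.τ n : ℝ)|)|} ∪ BadU := by
    intro ω hω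
    by_contra hcon
    rw [Set.mem_union] at hcon
    push_neg at hcon
    obtain ⟨hg1, hg2⟩ := hcon
    simp only [Set.mem_setOf_eq, not_lt, mul_one, abs_abs] at hg1
    -- extract goodness from ∉ BadU
    have hgood1 : ∀ (j : Fin (M.p n)) i, i ∈ W →
        |M.score n i r j ω| ≤ M1 * Real.sqrt L := by
      intro j i hi
      by_contra hlt
      push_neg at hlt
      exact hg2 (Set.mem_iUnion.mpr ⟨j, Or.inr (Set.mem_biUnion hi hlt)⟩)
    have hgood2 : ∀ j : Fin (M.p n),
        |∑ i ∈ Finset.range n, M.score n i r j ω| ≤ M1 * Real.sqrt ((n:ℝ) * L) := by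
      intro j
      by_contra hlt
      push_neg at hlt
      exact hg2 (Set.mem_iUnion.mpr ⟨j, Or.inl hlt⟩)
    -- the per-j bound
    have hmain : ∀ j : Fin (M.p n),
        |⟪cusum n (τhat n ω) (fun i => M.obs n i j) ω -
          cusum n (M.τ n) (fun i => M.obs n i j) ω, M.ψ r⟫| ≤
        Mfin * Real.sqrt (L / (n:ℝ)) := by
      intro j
      have hdev : |(τhat n ω : ℝ) - (M.τ n : ℝ)| ≤ (K:ℝ) := le_trans hg1 hMdK
      have hd1 := (abs_le.mp hdev).1
      have hd2 := (abs_le.mp hdev).2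
      have htK1 : τhat n ω ≤ M.τ n + K := by
        have h' : (τhat n ω : ℝ) ≤ (M.τ n : ℝ) + (K:ℝ) := by linarith
        exact_mod_cast h'
      have htK2 : M.τ n - K ≤ τhat n ω := by
        have h' : (M.τ n : ℝ) ≤ (τhat n ω : ℝ) + (K:ℝ) := by linarith
        have h'' : M.τ n ≤ τhat n ω + K := by exact_mod_cast h'
        omega
      set f : ℕ → ℝ := fun i => ⟪M.obs n i j ω, M.ψ r⟫ with hfdef
      set g : ℕ → ℝ :=
        fun i => ⟪(if i < M.τ n then M.μ0 n j else M.μ1 n j), M.ψ r⟫ with hgdef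
      have hfg : ∀ i, f i = g i + M.score n i r j ω := by
        intro i
        simp [hfdef, hgdef, SpatialModel.obs, inner_add_left, SpatialModel.score]
      have hgbd : ∀ i, |g i| ≤ C := by
        intro i
        rw [hgdef]
        refine (abs_real_inner_le_norm _ _).trans ?_
        rw [hON.1 r, mul_one]
        by_cases hi : i < M.τ n
        · simpa [hi] using (hC n j).1
        · simpa [hi] using (hC n j).2
      have hfbd : ∀ i ∈ W, |f i| ≤ C + M1 * Real.sqrt L := by
        intro i hi
        rw [hfg i]
        exact (abs_add_le _ _).trans (add_le_add (hgbd i) (hgood1 j i hi))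
      have hval : ⟪cusum n (τhat n ω) (fun i => M.obs n i j) ω -
            cusum n (M.τ n) (fun i => M.obs n i j) ω, M.ψ r⟫
          = ((n:ℝ) ^ (-(1:ℝ)/2)) *
            ((∑ i ∈ Finset.range (τhat n ω), f i - ∑ i ∈ Finset.range (M.τ n), f i)
              - (((τhat n ω : ℝ) - (M.τ n : ℝ))/(n:ℝ)) * ∑ i ∈ Finset.range n, f i) := by
        simp only [cusum, inner_sub_left, real_inner_smul_left, sum_inner, hfdef]
        ring
      have hsum1 : |∑ i ∈ Finset.range (τhat n ω), f i - ∑ i ∈ Finset.range (M.τ n), f i|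
          ≤ ∑ i ∈ W, |f i| := by
        rcases le_total (M.τ n) (τhat n ω) with h | h
        · rw [← Finset.sum_Ico_eq_sub f h]
          refine (Finset.abs_sum_le_sum_abs _ _).trans
            (Finset.sum_le_sum_of_subset_of_nonneg ?_ fun _ _ _ => abs_nonneg _)
          rw [hWdef]
          exact Finset.Ico_subset_Ico (by omega) htK1
        · rw [abs_sub_comm, ← Finset.sum_Ico_eq_sub f h]
          refine (Finset.abs_sum_le_sum_abs _ _).trans
            (Finset.sum_le_sum_of_subset_of_nonneg ?_ fun _ _ _ => abs_nonneg _)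
          rw [hWdef]
          exact Finset.Ico_subset_Ico htK2 (by omega)
      have hsum1' : |∑ i ∈ Finset.range (τhat n ω), f i - ∑ i ∈ Finset.range (M.τ n), f i|
          ≤ 2*(K:ℝ)*(C + M1 * Real.sqrt L) := by
        refine hsum1.trans ?_
        calc ∑ i ∈ W, |f i| ≤ ∑ _i ∈ W, (C + M1 * Real.sqrt L) :=
              Finset.sum_le_sum hfbd
          _ = (W.card : ℝ) * (C + M1 * Real.sqrt L) := by
              rw [Finset.sum_const, nsmul_eq_mul]
          _ ≤ 2*(K:ℝ)*(C + M1 * Real.sqrt L) :=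
              mul_le_mul_of_nonneg_right hWcard (by positivity)
      have hsumn : |∑ i ∈ Finset.range n, f i| ≤ (n:ℝ)*C + M1 * Real.sqrt ((n:ℝ)*L) := by
        have hsplit : ∑ i ∈ Finset.range n, f i
            = ∑ i ∈ Finset.range n, g i + ∑ i ∈ Finset.range n, M.score n i r j ω := by
          rw [← Finset.sum_add_distrib]
          exact Finset.sum_congr rfl fun i _ => hfg i
        rw [hsplit]
        refine (abs_add_le _ _).trans (add_le_add ?_ (hgood2 j))
        refine (Finset.abs_sum_le_sum_abs _ _).trans ?_
        calc ∑ i ∈ Finset.range n, |g i| ≤ ∑ _i ∈ Finset.range n, C :=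
              Finset.sum_le_sum fun i _ => hgbd i
          _ = (n:ℝ)*C := by rw [Finset.sum_const, nsmul_eq_mul, Finset.card_range]
      have hdle : |((τhat n ω : ℝ) - (M.τ n : ℝ))/(n:ℝ)| ≤ (K:ℝ)/(n:ℝ) := by
        rw [abs_div, Nat.abs_cast]
        gcongr
      rw [hval, abs_mul]
      have hcnn : |(n:ℝ) ^ (-(1:ℝ)/2)| = (Real.sqrt (n:ℝ))⁻¹ := by
        rw [abs_of_nonneg (Real.rpow_nonneg (Nat.cast_nonneg n) _),
          show (-(1:ℝ)/2) = -(1/2 : ℝ) by ring, Real.rpow_neg (Nat.cast_nonneg n),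
          ← Real.sqrt_eq_rpow]
      set sn := Real.sqrt (n:ℝ) with hsndef
      set sL := Real.sqrt L with hsLdef
      have hsn1 : (1:ℝ) ≤ sn := Real.one_le_sqrt.mpr (by exact_mod_cast hn1)
      have hsL1 : (1:ℝ) ≤ sL := Real.one_le_sqrt.mpr hL1
      have hsn0 : (0:ℝ) < sn := lt_of_lt_of_le one_pos hsn1
      have hsnsq : sn * sn = (n:ℝ) := Real.mul_self_sqrt (Nat.cast_nonneg n)
      have hsnL : Real.sqrt ((n:ℝ)*L) = sn * sL := Real.sqrt_mul (Nat.cast_nonneg n) L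
      have hLn : Real.sqrt (L/(n:ℝ)) = sL / sn := Real.sqrt_div hL0 _
      rw [hcnn, hLn]
      have hE : |(∑ i ∈ Finset.range (τhat n ω), f i - ∑ i ∈ Finset.range (M.τ n), f i)
            - (((τhat n ω : ℝ) - (M.τ n : ℝ))/(n:ℝ)) * ∑ i ∈ Finset.range n, f i|
          ≤ 2*(K:ℝ)*(C + M1*sL) + ((K:ℝ)/(n:ℝ)) * ((n:ℝ)*C + M1*(sn*sL)) := by
        rw [sub_eq_add_neg]
        refine (abs_add_le _ _).trans ?_
        rw [abs_neg, abs_mul]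
        refine add_le_add hsum1' ?_
        refine mul_le_mul hdle ?_ (abs_nonneg _) (by positivity)
        rw [← hsnL]
        exact hsumn
      calc (Real.sqrt (n:ℝ))⁻¹ *
            |(∑ i ∈ Finset.range (τhat n ω), f i - ∑ i ∈ Finset.range (M.τ n), f i)
              - (((τhat n ω : ℝ) - (M.τ n : ℝ))/(n:ℝ)) * ∑ i ∈ Finset.range n, f i|
          ≤ sn⁻¹ * (2*(K:ℝ)*(C + M1*sL) + ((K:ℝ)/(n:ℝ)) * ((n:ℝ)*C + M1*(sn*sL))) :=
            mul_le_mul_of_nonneg_left hE (by positivity)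
        _ ≤ sn⁻¹ * (Mfin * sL) := by
            refine mul_le_mul_of_nonneg_left ?_ (by positivity)
            have h3 : (K:ℝ)/(n:ℝ) * ((n:ℝ)*C + M1*(sn*sL))
                = (K:ℝ)*C + (K:ℝ)*M1*sL*(sn/(n:ℝ)) := by
              field_simp
            have h4 : sn/(n:ℝ) ≤ 1 := by
              rw [div_le_one hn0]
              nlinarith
            rw [h3, hMfindef]
            have h5 : (K:ℝ)*M1*sL*(sn/(n:ℝ)) ≤ (K:ℝ)*M1*sL*1 :=
              mul_le_mul_of_nonneg_left h4 (by positivity)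
            nlinarith [mul_le_mul_of_nonneg_left hsL1
              (show (0:ℝ) ≤ 3*(K:ℝ)*C by positivity),
              mul_le_mul_of_nonneg_left hsL1 (show (0:ℝ) ≤ (1:ℝ) by norm_num)]
        _ = Mfin * (sL / sn) := by
            field_simp
    -- conclude
    have hZnn : (0:ℝ) ≤ ⨆ j : Fin (M.p n),
        |⟪cusum n (τhat n ω) (fun i => M.obs n i j) ω -
          cusum n (M.τ n) (fun i => M.obs n i j) ω, M.ψ r⟫| := by
      exact le_ciSup_of_le (Set.Finite.bddAbove (Set.finite_range _))
        (⟨0, hppos⟩ : Fin (M.p n)) (abs_nonneg _)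
    have hZle : (⨆ j : Fin (M.p n),
        |⟪cusum n (τhat n ω) (fun i => M.obs n i j) ω -
          cusum n (M.τ n) (fun i => M.obs n i j) ω, M.ψ r⟫|) ≤
        Mfin * Real.sqrt (L / (n:ℝ)) := by
      have hne : Nonempty (Fin (M.p n)) := ⟨⟨0, hppos⟩⟩
      exact ciSup_le hmain
    simp only [Set.mem_setOf_eq] at hω
    rw [abs_of_nonneg hZnn] at hω
    exact absurd hω (not_lt.mpr hZle)
  calc P {ω | Mfin * Real.sqrt (L / (n:ℝ)) <
      |(⨆ j : Fin (M.p n), |⟪cusum n (τhat n ω) (fun i => M.obs n i j) ω -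
        cusum n (M.τ n) (fun i => M.obs n i j) ω, M.ψ r⟫|)| }
      ≤ P ({ω | Md * (1:ℝ) < |(|(τhat n ω : ℝ) - (M.τ n : ℝ)|)|} ∪ BadU) :=
        measure_mono hincl
    _ ≤ P {ω | Md * (1:ℝ) < |(|(τhat n ω : ℝ) - (M.τ n : ℝ)|)|} + P BadU :=
        measure_union_le _ _
    _ ≤ ENNReal.ofReal (ε/2) + ENNReal.ofReal (ε/2) := add_le_add hAev hBadUbd
    _ = ENNReal.ofReal ε := by
        rw [← ENNReal.ofReal_add (by positivity) (by positivity)]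
        congr 1; ring

end SpatialFDA13
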